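/- Let H̃, M, M̃ be Hermitian positive definite n×n matrices. Let X̂ = [X̂₁ X̂₂] simultaneously diagonalize (H̃,M) with eigenvalue blocks Λ̂₁,Λ̂₂, and let X̃ = [X̃₁ X̃₂] simultaneously diagonalize (H̃,M̃) with eigenvalue blocks Λ̃₁,Λ̃₂ (blocks of sizes k and n−k). If gap_comp := min { |λ̂_i − λ̃_j|/λ̃_j : λ̂_i ∈ σ(Λ̂₂), λ̃_j ∈ σ(Λ̃₁) } > 0, then ‖X̂₂* M X̃₁‖_F ≤ ‖M^{-1/2}(M−M̃)M̃^{-1/2}‖_F / gap_comp. -/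

import Mathlib

open Matrix
open scoped ComplexOrder

noncomputable def specNorm {n : Type*} [Fintype n] [DecidableEq n] (A : Matrix n n ℂ) : ℝ :=
  ‖Matrix.toEuclideanCLM (𝕜 := ℂ) A‖

noncomputable def frobNorm {m k : Type*} [Fintype m] [Fintype k] (A : Matrix m k ℂ) : ℝ :=
  Real.sqrt (∑ i, ∑ j, ‖A i j‖ ^ 2)

noncomputable def psqrt {n : Type*} [Fintype n] [DecidableEq n] {A : Matrix n n ℂ}
    (hA : A.PosDef) : Matrix n n ℂ :=
  (hA.1.eigenvectorUnitary : Matrix n n ℂ) * diagonal ((↑) ∘ (√·) ∘ hA.1.eigenvalues) *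
    (star hA.1.eigenvectorUnitary : Matrix n n ℂ)

/-! ### Auxiliary lemmas -/

noncomputable def phiAux {m k : Type*} [Fintype m] [Fintype k] (A : Matrix m k ℂ) : ℝ :=
  ∑ i, ∑ j, ‖A i j‖ ^ 2

lemma phiAux_nonneg {m k : Type*} [Fintype m] [Fintype k] (A : Matrix m k ℂ) : 0 ≤ phiAux A :=
  Finset.sum_nonneg fun _ _ => Finset.sum_nonneg fun _ _ => by positivity

lemma frobNorm_eq_sqrt_phiAux {m k : Type*} [Fintype m] [Fintype k] (A : Matrix m k ℂ) :
    frobNorm A = Real.sqrt (phiAux A) := rfl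

lemma phiAux_ct {a b : Type*} [Fintype a] [Fintype b] (C : Matrix a b ℂ) : phiAux Cᴴ = phiAux C := by
  unfold phiAux
  rw [Finset.sum_comm]
  simp [conjTranspose_apply]

lemma phiAux_eq_trace {m k : Type*} [Fintype m] [Fintype k] (A : Matrix m k ℂ) :
    phiAux A = (Matrix.trace (Aᴴ * A)).re := by
  unfold phiAux
  rw [Matrix.trace, Finset.sum_comm]
  simp only [Matrix.diag_apply, Matrix.mul_apply, conjTranspose_apply]
  rw [Complex.re_sum]
  congr 1; funext i
  rw [Complex.re_sum]
  congr 1; funext j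
  have : star (A j i) * A j i = (‖A j i‖ ^ 2 : ℝ) := by
    rw [Complex.star_def, ← Complex.normSq_eq_conj_mul_self]
    simp [Complex.normSq_eq_norm_sq]
  rw [this, Complex.ofReal_re]

lemma trace_re_nonneg_aux {n : Type*} [Fintype n] [DecidableEq n] {A : Matrix n n ℂ}
    (hA : A.PosSemidef) : 0 ≤ (Matrix.trace A).re := by
  rw [Matrix.trace, Complex.re_sum]
  refine Finset.sum_nonneg fun i _ => ?_
  have h : (0 : ℂ) ≤ A i i := by
    exact hA.diag_nonneg
  exact (Complex.le_def.mp h).1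

lemma phiAux_left {n k p : Type*} [Fintype n] [Fintype k] [Fintype p] [DecidableEq n]
    [DecidableEq k] [DecidableEq p]
    (U : Matrix n k ℂ) (hU : Uᴴ * U = 1) (B : Matrix n p ℂ) :
    phiAux (Uᴴ * B) ≤ phiAux B := by
  have hPH : (U * Uᴴ)ᴴ = U * Uᴴ := by
    rw [conjTranspose_mul, conjTranspose_conjTranspose]
  have hPP : (U * Uᴴ) * (U * Uᴴ) = U * Uᴴ := by
    rw [Matrix.mul_assoc, ← Matrix.mul_assoc Uᴴ U, hU, Matrix.one_mul]
  have h1 : (1 - U * Uᴴ)ᴴ = 1 - U * Uᴴ := by rw [conjTranspose_sub, conjTranspose_one, hPH]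
  have hproj : (1 - U * Uᴴ)ᴴ * (1 - U * Uᴴ) = 1 - U * Uᴴ := by
    rw [h1, Matrix.sub_mul, Matrix.mul_sub, Matrix.mul_sub, hPP, Matrix.one_mul, Matrix.mul_one]
    simp
  have hPsd : PosSemidef (1 - U * Uᴴ) := hproj ▸ posSemidef_conjTranspose_mul_self (1 - U * Uᴴ)
  have hQ : PosSemidef (Bᴴ * (1 - U * Uᴴ) * B) := hPsd.conjTranspose_mul_mul_same B
  have htr : Bᴴ * (1 - U * Uᴴ) * B = Bᴴ * B - (Uᴴ * B)ᴴ * (Uᴴ * B) := by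
    rw [conjTranspose_mul, conjTranspose_conjTranspose, Matrix.mul_sub, Matrix.mul_one,
      Matrix.sub_mul]
    simp only [Matrix.mul_assoc]
  have h0 := trace_re_nonneg_aux hQ
  rw [htr, Matrix.trace_sub, Complex.sub_re] at h0
  rw [phiAux_eq_trace, phiAux_eq_trace]
  linarith

lemma phiAux_contract {n k p q : Type*} [Fintype n] [Fintype k] [Fintype p] [Fintype q]
    [DecidableEq n] [DecidableEq k] [DecidableEq p] [DecidableEq q]
    (U : Matrix n k ℂ) (V : Matrix p q ℂ) (A : Matrix n p ℂ)
    (hU : Uᴴ * U = 1) (hV : Vᴴ * V = 1) :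
    phiAux (Uᴴ * A * V) ≤ phiAux A := by
  calc phiAux (Uᴴ * A * V) = phiAux (Uᴴ * (A * V)) := by rw [Matrix.mul_assoc]
    _ ≤ phiAux (A * V) := phiAux_left U hU _
    _ = phiAux ((A * V)ᴴ) := (phiAux_ct _).symm
    _ = phiAux (Vᴴ * Aᴴ) := by rw [conjTranspose_mul]
    _ ≤ phiAux Aᴴ := phiAux_left V hV _
    _ = phiAux A := phiAux_ct A

lemma block_decomp {N a b c d : Type*} [Fintype N] (Y₁ : Matrix N a ℂ) (Y₂ : Matrix N b ℂ)
    (Z₁ : Matrix N c ℂ) (Z₂ : Matrix N d ℂ) (A : Matrix N N ℂ) :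
    (fromCols Y₁ Y₂)ᴴ * A * fromCols Z₁ Z₂ =
      fromBlocks (Y₁ᴴ * A * Z₁) (Y₁ᴴ * A * Z₂) (Y₂ᴴ * A * Z₁) (Y₂ᴴ * A * Z₂) := by
  rw [conjTranspose_fromCols_eq_fromRows_conjTranspose, fromRows_mul,
    fromRows_mul_fromCols]

lemma psqrt_mul_self_aux {n : Type*} [Fintype n] [DecidableEq n] {A : Matrix n n ℂ}
    (hA : A.PosDef) : psqrt hA * psqrt hA = A := by
  have hU : (star hA.1.eigenvectorUnitary : Matrix n n ℂ) *
      (hA.1.eigenvectorUnitary : Matrix n n ℂ) = 1 := Unitary.coe_star_mul_self _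
  have hD : diagonal ((↑) ∘ (√·) ∘ hA.1.eigenvalues : n → ℂ) *
      diagonal ((↑) ∘ (√·) ∘ hA.1.eigenvalues : n → ℂ) =
      diagonal (RCLike.ofReal ∘ hA.1.eigenvalues) := by
    rw [diagonal_mul_diagonal]; congr 1; funext i
    simp only [Function.comp_apply]
    rw [← Complex.ofReal_mul, Real.mul_self_sqrt (hA.posSemidef.eigenvalues_nonneg i)]; rfl
  conv_rhs => rw [hA.1.spectral_theorem, Unitary.conjStarAlgAut_apply]
  unfold psqrt
  set U : Matrix n n ℂ := (hA.1.eigenvectorUnitary : Matrix n n ℂ)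
  set D := diagonal ((↑) ∘ (√·) ∘ hA.1.eigenvalues : n → ℂ)
  rw [show U * D * (star hA.1.eigenvectorUnitary : Matrix n n ℂ) *
      (U * D * (star hA.1.eigenvectorUnitary : Matrix n n ℂ)) =
      U * D * ((star hA.1.eigenvectorUnitary : Matrix n n ℂ) * U) * D *
      (star hA.1.eigenvectorUnitary : Matrix n n ℂ) by simp only [Matrix.mul_assoc],
    hU, Matrix.mul_one, Matrix.mul_assoc U D D, hD]

lemma psqrt_herm_aux {n : Type*} [Fintype n] [DecidableEq n] {A : Matrix n n ℂ}
    (hA : A.PosDef) : (psqrt hA)ᴴ = psqrt hA := by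
  unfold psqrt
  rw [conjTranspose_mul, conjTranspose_mul, diagonal_conjTranspose, Matrix.mul_assoc]
  have hs : star ((↑) ∘ (√·) ∘ hA.1.eigenvalues : n → ℂ) = (↑) ∘ (√·) ∘ hA.1.eigenvalues := by
    funext i; simp
  rw [hs, star_eq_conjTranspose, conjTranspose_conjTranspose]

lemma psqrt_det_ne_aux {n : Type*} [Fintype n] [DecidableEq n] {A : Matrix n n ℂ}
    (hA : A.PosDef) : (psqrt hA).det ≠ 0 := by
  have h : (psqrt hA).det * (psqrt hA).det = A.det := by
    rw [← det_mul, psqrt_mul_self_aux]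
  intro h0
  rw [h0, mul_zero] at h
  exact (ne_of_gt hA.det_pos) h.symm

lemma psqrt_mul_inv_aux {n : Type*} [Fintype n] [DecidableEq n] {A : Matrix n n ℂ}
    (hA : A.PosDef) : psqrt hA * (psqrt hA)⁻¹ = 1 :=
  mul_nonsing_inv _ (isUnit_iff_ne_zero.mpr (psqrt_det_ne_aux hA))

lemma psqrt_inv_mul_aux {n : Type*} [Fintype n] [DecidableEq n] {A : Matrix n n ℂ}
    (hA : A.PosDef) : (psqrt hA)⁻¹ * psqrt hA = 1 :=
  nonsing_inv_mul _ (isUnit_iff_ne_zero.mpr (psqrt_det_ne_aux hA))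

theorem stmt_9 {k m : ℕ}
    (Ht M Mt : Matrix (Fin k ⊕ Fin m) (Fin k ⊕ Fin m) ℂ)
    (hHt : Ht.PosDef) (hM : M.PosDef) (hMt : Mt.PosDef)
    (Xh₁ Xt₁ : Matrix (Fin k ⊕ Fin m) (Fin k) ℂ)
    (Xh₂ Xt₂ : Matrix (Fin k ⊕ Fin m) (Fin m) ℂ)
    (hat1 til1 : Fin k → ℝ) (hat2 til2 : Fin m → ℝ)
    (hdiagHt : (Matrix.fromCols Xh₁ Xh₂)ᴴ * Ht * Matrix.fromCols Xh₁ Xh₂ =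
      Matrix.diagonal (Sum.elim (fun j => (hat1 j : ℂ)) (fun i => (hat2 i : ℂ))))
    (hdiagM : (Matrix.fromCols Xh₁ Xh₂)ᴴ * M * Matrix.fromCols Xh₁ Xh₂ = 1)
    (hdiagHt' : (Matrix.fromCols Xt₁ Xt₂)ᴴ * Ht * Matrix.fromCols Xt₁ Xt₂ =
      Matrix.diagonal (Sum.elim (fun j => (til1 j : ℂ)) (fun i => (til2 i : ℂ))))
    (hdiagMt : (Matrix.fromCols Xt₁ Xt₂)ᴴ * Mt * Matrix.fromCols Xt₁ Xt₂ = 1)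
    (gapc : ℝ)
    (hg : gapc = ⨅ (i : Fin m), ⨅ (j : Fin k), |hat2 i - til1 j| / til1 j)
    (hpos : 0 < gapc) :
    frobNorm (Xh₂ᴴ * M * Xt₁) ≤
      frobNorm ((psqrt hM)⁻¹ * (M - Mt) * (psqrt hMt)⁻¹) / gapc := by
  set Xh := Matrix.fromCols Xh₁ Xh₂ with hXhdef
  set Xt := Matrix.fromCols Xt₁ Xt₂ with hXtdef
  set dh : Fin k ⊕ Fin m → ℂ := Sum.elim (fun j => (hat1 j : ℂ)) (fun i => (hat2 i : ℂ)) with hdh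
  set dt : Fin k ⊕ Fin m → ℂ := Sum.elim (fun j => (til1 j : ℂ)) (fun i => (til2 i : ℂ)) with hdt
  set P := psqrt hM with hPdef
  set Q := psqrt hMt with hQdef
  -- invertibility relations
  have hXh1 : Xh * (Xhᴴ * M) = 1 := mul_eq_one_comm.mp hdiagM
  -- spectral relations
  have hrelh : Xhᴴ * Ht = Matrix.diagonal dh * (Xhᴴ * M) := by
    calc Xhᴴ * Ht = (Xhᴴ * Ht) * (Xh * (Xhᴴ * M)) := by rw [hXh1, Matrix.mul_one]
      _ = (Xhᴴ * Ht * Xh) * (Xhᴴ * M) := by rw [Matrix.mul_assoc (Xhᴴ * Ht)]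
      _ = Matrix.diagonal dh * (Xhᴴ * M) := by rw [hdiagHt]
  have hXt1 : Xt * (Xtᴴ * Mt) = 1 := mul_eq_one_comm.mp hdiagMt
  have hrelt : Xtᴴ * Ht = Matrix.diagonal dt * (Xtᴴ * Mt) := by
    calc Xtᴴ * Ht = (Xtᴴ * Ht) * (Xt * (Xtᴴ * Mt)) := by rw [hXt1, Matrix.mul_one]
      _ = (Xtᴴ * Ht * Xt) * (Xtᴴ * Mt) := by rw [Matrix.mul_assoc (Xtᴴ * Ht)]
      _ = Matrix.diagonal dt * (Xtᴴ * Mt) := by rw [hdiagHt']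
  have hstar : star dt = dt := by
    funext x
    cases x <;> simp [hdt]
  have hHtXt : Ht * Xt = Mt * Xt * Matrix.diagonal dt := by
    have := congrArg conjTranspose hrelt
    rw [conjTranspose_mul, conjTranspose_conjTranspose, hHt.1.eq] at this
    rw [conjTranspose_mul, conjTranspose_mul, conjTranspose_conjTranspose, hMt.1.eq,
      diagonal_conjTranspose, hstar] at this
    rw [this, Matrix.mul_assoc]
  -- Sylvester-type relation
  have e1 : Matrix.diagonal dh * (Xhᴴ * M * Xt) = Xhᴴ * Mt * Xt * Matrix.diagonal dt := by
    calc Matrix.diagonal dh * (Xhᴴ * M * Xt)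
        = (Matrix.diagonal dh * (Xhᴴ * M)) * Xt := by
          rw [Matrix.mul_assoc (Matrix.diagonal dh)]
      _ = (Xhᴴ * Ht) * Xt := by rw [hrelh]
      _ = Xhᴴ * (Ht * Xt) := by rw [Matrix.mul_assoc]
      _ = Xhᴴ * (Mt * Xt * Matrix.diagonal dt) := by rw [hHtXt]
      _ = Xhᴴ * Mt * Xt * Matrix.diagonal dt := by simp only [Matrix.mul_assoc]
  have key : Matrix.diagonal dh * (Xhᴴ * M * Xt) - (Xhᴴ * M * Xt) * Matrix.diagonal dt
      = -((Xhᴴ * (M - Mt) * Xt) * Matrix.diagonal dt) := by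
    rw [e1]
    have hE' : Xhᴴ * (M - Mt) * Xt = Xhᴴ * M * Xt - Xhᴴ * Mt * Xt := by
      rw [Matrix.mul_sub, Matrix.sub_mul]
    rw [hE', Matrix.sub_mul]
    abel
  -- blocks
  have hblkM := hdiagM
  rw [hXhdef, block_decomp] at hblkM
  have h22 : Xh₂ᴴ * M * Xh₂ = 1 := by
    have := congrArg Matrix.toBlocks₂₂ hblkM
    rw [Matrix.toBlocks_fromBlocks₂₂, ← fromBlocks_one, Matrix.toBlocks_fromBlocks₂₂] at this
    exact this
  have hblkMt := hdiagMt
  rw [hXtdef, block_decomp] at hblkMt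
  have h11 : Xt₁ᴴ * Mt * Xt₁ = 1 := by
    have := congrArg Matrix.toBlocks₁₁ hblkMt
    rw [Matrix.toBlocks_fromBlocks₁₁, ← fromBlocks_one, Matrix.toBlocks_fromBlocks₁₁] at this
    exact this
  -- entrywise bound
  have entry_bound : ∀ (i : Fin m) (j : Fin k),
      ‖(Xh₂ᴴ * M * Xt₁) i j‖ ≤ ‖(Xh₂ᴴ * (M - Mt) * Xt₁) i j‖ / gapc := by
    intro i j
    -- the entry of the big matrices
    have hWblk : Xhᴴ * M * Xt = fromBlocks (Xh₁ᴴ * M * Xt₁) (Xh₁ᴴ * M * Xt₂)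
        (Xh₂ᴴ * M * Xt₁) (Xh₂ᴴ * M * Xt₂) := by rw [hXhdef, hXtdef, block_decomp]
    have hEblk : Xhᴴ * (M - Mt) * Xt = fromBlocks (Xh₁ᴴ * (M - Mt) * Xt₁)
        (Xh₁ᴴ * (M - Mt) * Xt₂) (Xh₂ᴴ * (M - Mt) * Xt₁) (Xh₂ᴴ * (M - Mt) * Xt₂) := by
      rw [hXhdef, hXtdef, block_decomp]
    have hentry : dh (Sum.inr i) * (Xhᴴ * M * Xt) (Sum.inr i) (Sum.inl j)
        - (Xhᴴ * M * Xt) (Sum.inr i) (Sum.inl j) * dt (Sum.inl j)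
        = -((Xhᴴ * (M - Mt) * Xt) (Sum.inr i) (Sum.inl j) * dt (Sum.inl j)) := by
      have := congrFun (congrFun key (Sum.inr i)) (Sum.inl j)
      simpa [Matrix.sub_apply, Matrix.neg_apply, Matrix.diagonal_mul, Matrix.mul_diagonal]
        using this
    rw [hWblk, hEblk] at hentry
    simp only [fromBlocks_apply₂₁, hdh, hdt, Sum.elim_inr, Sum.elim_inl] at hentry
    set w := (Xh₂ᴴ * M * Xt₁) i j with hw
    set e := (Xh₂ᴴ * (M - Mt) * Xt₁) i j with he
    -- scalar equation
    have hsc : ((hat2 i : ℂ) - (til1 j : ℂ)) * w = -(e * (til1 j : ℂ)) := by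
      linear_combination hentry
    have habs : |hat2 i - til1 j| * ‖w‖ = ‖e‖ * |til1 j| := by
      have := congrArg norm hsc
      rwa [norm_mul, norm_neg, norm_mul, ← Complex.ofReal_sub, Complex.norm_real,
        Real.norm_eq_abs, Complex.norm_real, Real.norm_eq_abs] at this
    -- the gap bound
    have hle : gapc ≤ |hat2 i - til1 j| / til1 j := by
      rw [hg]
      calc (⨅ (i : Fin m), ⨅ (j : Fin k), |hat2 i - til1 j| / til1 j)
          ≤ ⨅ (j : Fin k), |hat2 i - til1 j| / til1 j :=
            ciInf_le (Set.finite_range _).bddBelow i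
        _ ≤ |hat2 i - til1 j| / til1 j := ciInf_le (Set.finite_range _).bddBelow j
    have hq : 0 < |hat2 i - til1 j| / til1 j := lt_of_lt_of_le hpos hle
    have htpos : 0 < til1 j := by
      rcases div_pos_iff.mp hq with ⟨_, h⟩ | ⟨h, _⟩
      · exact h
      · exact absurd h (not_lt.mpr (abs_nonneg _))
    have hd0 : 0 < |hat2 i - til1 j| := by
      rcases div_pos_iff.mp hq with ⟨h, _⟩ | ⟨_, h⟩
      · exact h
      · exact absurd h (not_lt.mpr htpos.le)
    have h1 : gapc * til1 j ≤ |hat2 i - til1 j| := (le_div_iff₀ htpos).mp hle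
    rw [abs_of_pos htpos] at habs
    rw [le_div_iff₀ hpos]
    nlinarith [norm_nonneg w, norm_nonneg e, mul_nonneg (norm_nonneg e) (sub_nonneg.mpr h1)]
  -- summation
  have hsum : phiAux (Xh₂ᴴ * M * Xt₁) ≤ phiAux (Xh₂ᴴ * (M - Mt) * Xt₁) / gapc ^ 2 := by
    unfold phiAux
    rw [Finset.sum_div]
    refine Finset.sum_le_sum fun i _ => ?_
    rw [Finset.sum_div]
    refine Finset.sum_le_sum fun j _ => ?_
    have := entry_bound i j
    calc ‖(Xh₂ᴴ * M * Xt₁) i j‖ ^ 2 ≤ (‖(Xh₂ᴴ * (M - Mt) * Xt₁) i j‖ / gapc) ^ 2 := by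
          have h0 : (0 : ℝ) ≤ ‖(Xh₂ᴴ * M * Xt₁) i j‖ := norm_nonneg _
          exact pow_le_pow_left₀ h0 this 2
      _ = ‖(Xh₂ᴴ * (M - Mt) * Xt₁) i j‖ ^ 2 / gapc ^ 2 := by rw [div_pow]
  -- rewrite E
  have hPinv : P * P⁻¹ = 1 := psqrt_mul_inv_aux hM
  have hQinv : Q⁻¹ * Q = 1 := psqrt_inv_mul_aux hMt
  have hE : Xh₂ᴴ * (M - Mt) * Xt₁ =
      (P * Xh₂)ᴴ * (P⁻¹ * (M - Mt) * Q⁻¹) * (Q * Xt₁) := by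
    calc Xh₂ᴴ * (M - Mt) * Xt₁
        = Xh₂ᴴ * (P * P⁻¹) * (M - Mt) * (Q⁻¹ * Q) * Xt₁ := by
          rw [hPinv, hQinv, Matrix.mul_one, Matrix.mul_one]
      _ = (P * Xh₂)ᴴ * (P⁻¹ * (M - Mt) * Q⁻¹) * (Q * Xt₁) := by
          rw [conjTranspose_mul, psqrt_herm_aux]
          simp only [Matrix.mul_assoc]
          rfl
  have hU : (P * Xh₂)ᴴ * (P * Xh₂) = 1 := by
    calc (P * Xh₂)ᴴ * (P * Xh₂) = Xh₂ᴴ * (P * P) * Xh₂ := by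
          rw [conjTranspose_mul, psqrt_herm_aux]
          simp only [Matrix.mul_assoc]
          rfl
      _ = 1 := by rw [psqrt_mul_self_aux]; exact h22
  have hV : (Q * Xt₁)ᴴ * (Q * Xt₁) = 1 := by
    calc (Q * Xt₁)ᴴ * (Q * Xt₁) = Xt₁ᴴ * (Q * Q) * Xt₁ := by
          rw [conjTranspose_mul, psqrt_herm_aux]
          simp only [Matrix.mul_assoc]
          rfl
      _ = 1 := by rw [psqrt_mul_self_aux]; exact h11
  have hcontract : phiAux (Xh₂ᴴ * (M - Mt) * Xt₁) ≤ phiAux (P⁻¹ * (M - Mt) * Q⁻¹) := by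
    rw [hE]
    exact phiAux_contract _ _ _ hU hV
  -- conclude
  rw [frobNorm_eq_sqrt_phiAux, frobNorm_eq_sqrt_phiAux]
  have hfinal : phiAux (Xh₂ᴴ * M * Xt₁) ≤ phiAux (P⁻¹ * (M - Mt) * Q⁻¹) / gapc ^ 2 := by
    refine hsum.trans ?_
    have h2 : (0 : ℝ) ≤ gapc ^ 2 := by positivity
    exact div_le_div_of_nonneg_right hcontract h2
  calc Real.sqrt (phiAux (Xh₂ᴴ * M * Xt₁))
      ≤ Real.sqrt (phiAux (P⁻¹ * (M - Mt) * Q⁻¹) / gapc ^ 2) := Real.sqrt_le_sqrt hfinal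
    _ = Real.sqrt (phiAux (P⁻¹ * (M - Mt) * Q⁻¹)) / gapc := by
        rw [Real.sqrt_div (phiAux_nonneg _), Real.sqrt_sq hpos.le]
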